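/- Let K be a complete discretely valued field with perfect residue field of characteristic p, let k ≥ 2, and let f(X) = X^{p^k} + (-1)^{b_0} ω π_K^{A_0} X^{p^k - b_0} + (-1)^{p^k} π_K a be an Eisenstein polynomial over K with p ∤ b_0, 1 ≤ b_0 ≤ p^k, 1 ≤ A_0 ≤ e_K, ω a nonzero Teichmüller representative, and a ≡ 1 (mod M_K). Then the extension L = K(π_L) generated by a root π_L of f has indices of inseparability i_k = 0 and i_j = p^k A_0 - b_0 for 0 ≤ j ≤ k - 1; in particular L/K has exactly two distinct indices of inseparability. -/

import Mathlib

open Polynomial Classical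

/-- A rank-one valuation `v` on `L`, written additively with values in `ℚ` and
junk value at `0`, which restricts to a normalized (`ℤ`-valued, surjective onto
`ℤ`) complete discrete valuation on the subfield `K`, and whose values on `L`
lie in `(1/n)ℤ`. -/
structure ExtValuation (K L : Type) [Field K] [Field L] [Algebra K L]
    (v : L → ℚ) (n : ℕ) : Prop where
  map_mul : ∀ x y : L, x ≠ 0 → y ≠ 0 → v (x * y) = v x + v y
  map_add : ∀ x y : L, x ≠ 0 → y ≠ 0 → x + y ≠ 0 → min (v x) (v y) ≤ v (x + y)
  int_on_base : ∀ x : K, x ≠ 0 → ∃ m : ℤ, v (algebraMap K L x) = m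
  exists_uniformizer : ∃ x : K, x ≠ 0 ∧ v (algebraMap K L x) = 1
  denom : ∀ x : L, x ≠ 0 → ∃ m : ℤ, v x = (m : ℚ) / n
  complete : ∀ a : ℕ → K,
    (∀ N : ℚ, ∃ M : ℕ, ∀ i ≥ M, ∀ j ≥ M,
      a i = a j ∨ N ≤ v (algebraMap K L (a i - a j))) →
    ∃ l : K, ∀ N : ℚ, ∃ M : ℕ, ∀ i ≥ M,
      a i = l ∨ N ≤ v (algebraMap K L (a i - l))

/-- The residue field of `K` has characteristic `p`: `p` lies in the maximal
ideal of the valuation ring of `K`. -/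
def ResidueCharP (K L : Type) [Field K] [Field L] [Algebra K L]
    (v : L → ℚ) (p : ℕ) : Prop :=
  (p : K) = 0 ∨ 0 < v (algebraMap K L (p : K))

/-- The residue field of `K` is perfect: every unit of the valuation ring is a
`p`-th power modulo the maximal ideal. -/
def PerfectResidue (K L : Type) [Field K] [Field L] [Algebra K L]
    (v : L → ℚ) (p : ℕ) : Prop :=
  ∀ x : K, x ≠ 0 → v (algebraMap K L x) = 0 →
    ∃ y : K, x = y ^ p ∨ (x - y ^ p ≠ 0 ∧ 0 < v (algebraMap K L (x - y ^ p)))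

/-- `ω` is a nonzero Teichmüller representative of `K`: a unit of the valuation
ring admitting `p^m`-th roots for every `m`. -/
def IsTeichmuller (K L : Type) [Field K] [Field L] [Algebra K L]
    (v : L → ℚ) (p : ℕ) (ω : K) : Prop :=
  ω ≠ 0 ∧ v (algebraMap K L ω) = 0 ∧ ∀ m : ℕ, ∃ y : K, y ^ p ^ m = ω

/-- `ĩ_j = min{n·v(c_h) − h : 1 ≤ h ≤ n, v_p(h) ≤ j}`, computed in `ℕ∞` from
the function `w h = n·(valuation of c_h)` data `w h = v(c_h)`. -/
noncomputable def itildeIdx (p n : ℕ) (w : ℕ → ℕ∞) (j : ℕ) : ℕ∞ :=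
  ⨅ h : {h : ℕ // 1 ≤ h ∧ h ≤ n ∧ padicValNat p h ≤ j},
    ((n : ℕ∞) * w h.1 - (h.1 : ℕ∞))

/-- `i_j = min{ĩ_{j'} + (j' − j) n e_K : j ≤ j' ≤ k}`. -/
noncomputable def insepIdx (p n k : ℕ) (eK : ℕ∞) (w : ℕ → ℕ∞) (j : ℕ) : ℕ∞ :=
  ⨅ j' : {j' : ℕ // j ≤ j' ∧ j' ≤ k},
    itildeIdx p n w j'.1 + ((j'.1 : ℕ∞) - (j : ℕ∞)) * (n : ℕ∞) * eK

/-- The valuation (in `ℕ∞`, with `⊤` for the zero coefficient) of the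
coefficient `c_h` of the minimal polynomial
`X^n − c_1 X^{n-1} + ⋯ + (−1)^n c_n` of `πL`, so that
`(−1)^h c_h = coeff (n−h)`. -/
noncomputable def coeffVal (K L : Type) [Field K] [Field L] [Algebra K L]
    (v : L → ℚ) (n : ℕ) (πL : L) (h : ℕ) : ℕ∞ :=
  if (minpoly K πL).coeff (n - h) = 0 then ⊤
  else ((v (algebraMap K L ((minpoly K πL).coeff (n - h)))).num).toNat

/-- `e_K = v_K(p)`, with `e_K = ∞` when `char K = p`. -/
noncomputable def eAbs (K L : Type) [Field K] [Field L] [Algebra K L]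
    (v : L → ℚ) (p : ℕ) : ℕ∞ :=
  if (p : K) = 0 then ⊤ else ((v (algebraMap K L (p : K))).num).toNat

/-- `L/K` has indices of inseparability `i 0, …, i k`: the indices computed
from the minimal polynomial of a uniformizer of `L` are given by `i`. -/
def HasInsepIndices (K L : Type) [Field K] [Field L] [Algebra K L]
    (v : L → ℚ) (p n k : ℕ) (i : ℕ → ℕ∞) : Prop :=
  ∃ πL : L, v πL = 1 / (n : ℚ) ∧ Algebra.adjoin K {πL} = ⊤ ∧
    ∀ j ≤ k, insepIdx p n k (eAbs K L v p) (coeffVal K L v n πL) j = i j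

section Aux
variable {K L : Type} [Field K] [Field L] [Algebra K L] {v : L → ℚ} {n : ℕ}
variable (hv : ExtValuation K L v n)
include hv

lemma v_one : v (1 : L) = 0 := by
  have := hv.map_mul 1 1 one_ne_zero one_ne_zero
  simp at this; linarith

lemma v_neg (x : L) (hx : x ≠ 0) : v (-x) = v x := by
  have h1 := hv.map_mul x x hx hx
  have h2 := hv.map_mul (-x) (-x) (neg_ne_zero.2 hx) (neg_ne_zero.2 hx)
  rw [neg_mul_neg] at h2
  linarith [h1, h2]

lemma v_pow (x : L) (hx : x ≠ 0) (m : ℕ) : v (x ^ m) = m * v x := by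
  induction m with
  | zero => simpa using v_one hv
  | succ m ih =>
    rw [pow_succ, hv.map_mul _ _ (pow_ne_zero _ hx) hx, ih]
    push_cast; ring

/-- strict ultrametric -/
lemma v_add_eq_left (x y : L) (hx : x ≠ 0) (hy : y ≠ 0) (h : v x < v y) :
    x + y ≠ 0 ∧ v (x + y) = v x := by
  have hxy : x + y ≠ 0 := by
    intro h0
    have : y = -x := by linear_combination h0
    rw [this, v_neg hv x hx] at h; exact lt_irrefl _ h
  refine ⟨hxy, ?_⟩
  have h1 := hv.map_add x y hx hy hxy
  rw [min_eq_left h.le] at h1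
  by_contra hne
  have hlt : v x < v (x + y) := lt_of_le_of_ne h1 (Ne.symm hne)
  have h2 := hv.map_add (x + y) (-y) hxy (neg_ne_zero.2 hy) (by simpa using hx)
  simp only [add_neg_cancel_right] at h2
  rw [v_neg hv y hy] at h2
  have : v x < min (v (x + y)) (v y) := lt_min hlt h
  linarith

lemma v_add_eq_right (x y : L) (hx : x ≠ 0) (hy : y ≠ 0) (h : v y < v x) :
    x + y ≠ 0 ∧ v (x + y) = v y := by
  rw [add_comm]; exact v_add_eq_left hv y x hy hx h

/-- sum of nonzero terms with pairwise distinct valuations is nonzero -/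
lemma v_sum (s : Finset ℕ) (g : ℕ → L) (h0 : ∀ i ∈ s, g i ≠ 0)
    (hd : ∀ i ∈ s, ∀ j ∈ s, i ≠ j → v (g i) ≠ v (g j)) (hne : s.Nonempty) :
    s.sum g ≠ 0 ∧ ∃ i ∈ s, v (s.sum g) = v (g i) := by
  classical
  induction s using Finset.induction_on with
  | empty => simp at hne
  | @insert a s ha ih =>
    by_cases hs : s.Nonempty
    · obtain ⟨hS, i, hi, hvi⟩ := ih (fun i hi => h0 i (Finset.mem_insert_of_mem hi))
        (fun i hi j hj => hd i (Finset.mem_insert_of_mem hi) j (Finset.mem_insert_of_mem hj)) hs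
      have hga : g a ≠ 0 := h0 a (Finset.mem_insert_self a s)
      have hne' : v (g a) ≠ v (s.sum g) := by
        rw [hvi]
        exact hd a (Finset.mem_insert_self a s) i (Finset.mem_insert_of_mem hi)
          (fun h => ha (h ▸ hi))
      rw [Finset.sum_insert ha]
      rcases lt_or_gt_of_ne hne' with hlt | hgt
      · obtain ⟨h1, h2⟩ := v_add_eq_left hv (g a) (s.sum g) hga hS hlt
        exact ⟨h1, a, Finset.mem_insert_self a s, h2⟩
      · obtain ⟨h1, h2⟩ := v_add_eq_right hv (g a) (s.sum g) hga hS hgt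
        exact ⟨h1, i, Finset.mem_insert_of_mem hi, h2 ▸ hvi ▸ rfl⟩
    · rw [Finset.not_nonempty_iff_eq_empty] at hs
      subst hs
      rw [Finset.sum_insert (by simp), Finset.sum_empty, add_zero]
      exact ⟨h0 a (by simp), a, by simp⟩

omit hv in
lemma algMap_ne_zero (x : K) (hx : x ≠ 0) : algebraMap K L (x) ≠ 0 :=
  (map_ne_zero (algebraMap K L)).2 hx

lemma v_alg_mul (x y : K) (hx : x ≠ 0) (hy : y ≠ 0) :
    v (algebraMap K L (x * y)) = v (algebraMap K L x) + v (algebraMap K L y) := by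
  rw [map_mul]
  exact hv.map_mul _ _ (algMap_ne_zero (L := L) x hx) (algMap_ne_zero (L := L) y hy)

lemma v_alg_pow (x : K) (hx : x ≠ 0) (m : ℕ) :
    v (algebraMap K L (x ^ m)) = m * v (algebraMap K L x) := by
  rw [map_pow]; exact v_pow hv _ (algMap_ne_zero (L := L) x hx) m

lemma v_alg_neg_one_pow (b : ℕ) : v (algebraMap K L ((-1 : K) ^ b)) = 0 := by
  rcases neg_one_pow_eq_or K b with h | h <;> rw [h] <;> simp only [map_one, map_neg]
  · exact v_one hv
  · rw [v_neg hv 1 one_ne_zero]; exact v_one hv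

end Aux

section Main
variable {K L : Type} [Field K] [Field L] [Algebra K L] {v : L → ℚ}

lemma key_vpiL (p k : ℕ) (hp : p.Prime) (hk : 2 ≤ k)
    (hv : ExtValuation K L v (p ^ k))
    (πK : K) (hπK0 : πK ≠ 0) (hπK1 : v (algebraMap K L πK) = 1)
    (A0 b0 : ℕ) (hb01 : 1 ≤ b0) (hb0q : b0 < p ^ k) (hA01 : 1 ≤ A0)
    (α β : K) (hα0 : α ≠ 0) (hvα : v (algebraMap K L α) = (A0 : ℚ))
    (hβ0 : β ≠ 0) (hvβ : v (algebraMap K L β) = 1)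
    (πL : L) (hπL0 : πL ≠ 0)
    (heq : πL ^ p ^ k + algebraMap K L α * πL ^ (p ^ k - b0) + algebraMap K L β = 0) :
    v πL = 1 / ((p ^ k : ℕ) : ℚ) := by
  set q := p ^ k with hq
  have hq4 : 4 ≤ q := by
    calc (4:ℕ) = 2 ^ 2 := rfl
    _ ≤ p ^ 2 := Nat.pow_le_pow_left hp.two_le 2
    _ ≤ p ^ k := Nat.pow_le_pow_right hp.one_lt.le hk
  have hqQ : ((q : ℕ) : ℚ) ≠ 0 := by positivity
  obtain ⟨m, hm⟩ := hv.denom πL hπL0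
  set T1 := πL ^ q with hT1
  set T2 := algebraMap K L α * πL ^ (q - b0) with hT2
  set T3 := algebraMap K L β with hT3
  have hT10 : T1 ≠ 0 := pow_ne_zero _ hπL0
  have hT20 : T2 ≠ 0 := mul_ne_zero (algMap_ne_zero α hα0) (pow_ne_zero _ hπL0)
  have hT30 : T3 ≠ 0 := algMap_ne_zero β hβ0
  have hvT1 : v T1 = (m : ℚ) := by
    rw [hT1, v_pow hv πL hπL0, hm]; field_simp
  have hvT2 : v T2 = (A0 : ℚ) + ((q : ℚ) - b0) * m / q := by
    rw [hT2, hv.map_mul _ _ (algMap_ne_zero α hα0) (pow_ne_zero _ hπL0),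
      v_pow hv πL hπL0, hm, hvα]
    have : ((q - b0 : ℕ) : ℚ) = (q : ℚ) - b0 := by
      rw [Nat.cast_sub hb0q.le]
    rw [this]; ring
  have hvT3 : v T3 = 1 := by rw [hT3, hvβ]
  have hsum : T2 + T3 = -T1 := by linear_combination heq
  have hmain : (m : ℚ) = 1 := by
    rcases lt_trichotomy (v T2) (v T3) with hlt | heq' | hgt
    · exfalso
      obtain ⟨h1, h2⟩ := v_add_eq_left hv T2 T3 hT20 hT30 hlt
      rw [hsum, v_neg hv T1 hT10] at h2
      rw [hvT1, hvT2] at h2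
      rw [hvT2, hvT3] at hlt
      have hq4' : (4 : ℚ) ≤ q := by exact_mod_cast hq4
      have hqpos : (0 : ℚ) < q := by linarith
      have hA1 : (1 : ℚ) ≤ A0 := by exact_mod_cast hA01
      have hb1 : (1 : ℚ) ≤ b0 := by exact_mod_cast hb01
      have hbq : (b0 : ℚ) < q := by exact_mod_cast hb0q
      have e1 : (b0 : ℚ) * m = A0 * q := by field_simp at h2; linarith
      have hlt2 : ((q : ℚ) - b0) * m / q < 1 - A0 := by linarith
      rw [div_lt_iff₀ hqpos] at hlt2
      have hqb : (0 : ℚ) < (q : ℚ) - b0 := by linarith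
      have h4 : (1 - (A0 : ℚ)) * q ≤ 0 :=
        mul_nonpos_of_nonpos_of_nonneg (by linarith) hqpos.le
      have h3 : ((q : ℚ) - b0) * m < 0 := by linarith
      have hmneg : (m : ℚ) < 0 := by
        by_contra hge0; push_neg at hge0
        exact absurd (mul_nonneg hqb.le hge0) (not_le.2 h3)
      have hb0pos : (0 : ℚ) < b0 := by linarith
      have h5 : (0 : ℚ) < (A0 : ℚ) * q := by positivity
      nlinarith [e1, mul_neg_of_pos_of_neg hb0pos hmneg]
    · exfalso
      -- v T2 = v T3 = 1, derive m ≤ 0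
      rw [hvT2, hvT3] at heq'
      have hA1 : (1 : ℚ) ≤ A0 := by exact_mod_cast hA01
      have hbq : (b0 : ℚ) < q := by exact_mod_cast hb0q
      have hq4' : (4 : ℚ) ≤ q := by exact_mod_cast hq4
      have hqpos : (0 : ℚ) < q := by linarith
      have hm0 : (m : ℚ) ≤ 0 := by
        by_contra hpos
        push_neg at hpos
        have hqb : (0 : ℚ) < (q : ℚ) - b0 := by linarith
        have h1 : (0 : ℚ) < ((q : ℚ) - b0) * m := mul_pos hqb hpos
        have h2 : (0 : ℚ) < ((q : ℚ) - b0) * m / q := div_pos h1 hqpos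
        linarith [heq']
      have hT23 : T2 + T3 ≠ 0 := by
        intro h0
        rw [h0] at hsum
        exact hT10 (neg_eq_zero.1 hsum.symm)
      have hge := hv.map_add T2 T3 hT20 hT30 hT23
      rw [hvT2, hvT3, heq', min_self] at hge
      rw [hsum, v_neg hv T1 hT10, hvT1] at hge
      linarith [hge, hm0]
    · obtain ⟨h1, h2⟩ := v_add_eq_right hv T2 T3 hT20 hT30 hgt
      rw [hsum, v_neg hv T1 hT10] at h2
      rw [hvT1, hvT3] at h2
      exact h2
  rw [hm, hmain]

lemma minpoly_natDegree_ge (n : ℕ) (hv : ExtValuation K L v n) (hn : 1 ≤ n)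
    (πL : L) (hπL0 : πL ≠ 0) (hvm : v πL = 1 / (n : ℚ)) (hint : IsIntegral K πL) :
    n ≤ (minpoly K πL).natDegree := by
  by_contra hlt
  push_neg at hlt
  set g := minpoly K πL with hg
  have hmon : g.Monic := minpoly.monic hint
  have haev : Polynomial.aeval πL g = 0 := minpoly.aeval K πL
  set d := g.natDegree with hd
  have hnQ : ((n : ℕ) : ℚ) ≠ 0 := by positivity
  set G : ℕ → L := fun i => algebraMap K L (g.coeff i) * πL ^ i with hG
  have hsum : ∑ i ∈ Finset.range (d + 1), G i = 0 := by
    rw [← haev, Polynomial.aeval_eq_sum_range]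
    exact Finset.sum_congr rfl (fun i _ => (Algebra.smul_def _ _).symm)
  set s := (Finset.range (d + 1)).filter (fun i => g.coeff i ≠ 0) with hs
  have hss : ∑ i ∈ s, G i = ∑ i ∈ Finset.range (d + 1), G i := by
    apply Finset.sum_filter_of_ne
    intro i _ hGi
    intro hc
    apply hGi
    rw [hG]; simp [hc]
  have hds : d ∈ s := by
    rw [hs]
    simp only [Finset.mem_filter, Finset.mem_range]
    exact ⟨by omega, by rw [Polynomial.Monic.coeff_natDegree hmon]; exact one_ne_zero⟩
  have h0 : ∀ i ∈ s, G i ≠ 0 := by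
    intro i hi
    rw [hs, Finset.mem_filter] at hi
    exact mul_ne_zero (algMap_ne_zero _ hi.2) (pow_ne_zero _ hπL0)
  have hvG : ∀ i ∈ s, ∃ mi : ℤ, v (G i) = (mi : ℚ) + i / n := by
    intro i hi
    rw [hs, Finset.mem_filter] at hi
    obtain ⟨mi, hmi⟩ := hv.int_on_base _ hi.2
    refine ⟨mi, ?_⟩
    rw [hG]
    rw [hv.map_mul _ _ (algMap_ne_zero _ hi.2) (pow_ne_zero _ hπL0),
      v_pow hv πL hπL0, hmi, hvm]
    ring
  have hdist : ∀ i ∈ s, ∀ j ∈ s, i ≠ j → v (G i) ≠ v (G j) := by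
    intro i hi j hj hij hvij
    obtain ⟨mi, hmi⟩ := hvG i hi
    obtain ⟨mj, hmj⟩ := hvG j hj
    rw [hmi, hmj] at hvij
    have hiQ : (mi : ℚ) * n + i = mj * n + j := by
      field_simp at hvij; linarith
    have hiZ : mi * (n : ℤ) + i = mj * n + j := by exact_mod_cast hiQ
    have hin : i < n := by
      rw [hs, Finset.mem_filter, Finset.mem_range] at hi; omega
    have hjn : j < n := by
      rw [hs, Finset.mem_filter, Finset.mem_range] at hj; omega
    have hinZ : (i : ℤ) < n := by exact_mod_cast hin
    have hjnZ : (j : ℤ) < n := by exact_mod_cast hjn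
    have hiZ0 : (0 : ℤ) ≤ i := Int.ofNat_nonneg i
    have hjZ0 : (0 : ℤ) ≤ j := Int.ofNat_nonneg j
    have hnZ0 : (0 : ℤ) ≤ n := Int.ofNat_nonneg n
    rcases lt_trichotomy mi mj with h | h | h
    · have h1 : (1 : ℤ) ≤ mj - mi := by omega
      have h2 : (n : ℤ) * 1 ≤ n * (mj - mi) := by
        apply mul_le_mul_of_nonneg_left h1 hnZ0
      nlinarith [hiZ, h2]
    · apply hij
      have : (i : ℤ) = j := by rw [h] at hiZ; omega
      exact_mod_cast this
    · have h1 : (1 : ℤ) ≤ mi - mj := by omega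
      have h2 : (n : ℤ) * 1 ≤ n * (mi - mj) := by
        apply mul_le_mul_of_nonneg_left h1 hnZ0
      nlinarith [hiZ, h2]
  obtain ⟨hne0, -⟩ := v_sum hv s G h0 hdist ⟨d, hds⟩
  exact hne0 (hss.trans hsum)


lemma enat_sub_coe (x y : ℕ) : (x : ℕ∞) - (y : ℕ∞) = ((x - y : ℕ) : ℕ∞) := by
  exact_mod_cast (WithTop.coe_sub).symm

end Main

/-- Remark 4.2: a root of the Eisenstein polynomial
`X^{p^k} + (−1)^{b₀} ω π_K^{A₀} X^{p^k−b₀} + (−1)^{p^k} π_K a` with `p ∤ b₀`,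
`1 ≤ b₀ ≤ p^k`, `1 ≤ A₀ ≤ e_K`, `ω` a nonzero Teichmüller representative and
`a ≡ 1 (mod M_K)` generates an extension `L/K` with indices of inseparability
`i_k = 0` and `i_j = p^k A₀ − b₀` for `0 ≤ j ≤ k−1` (two distinct indices). -/
theorem stmt11 (p k : ℕ) (hp : p.Prime) (hk : 2 ≤ k)
    (K L : Type) [Field K] [Field L] [Algebra K L]
    (v : L → ℚ) (hv : ExtValuation K L v (p ^ k))
    (hres : ResidueCharP K L v p) (hperf : PerfectResidue K L v p)
    (πK : K) (hπK : πK ≠ 0 ∧ v (algebraMap K L πK) = 1)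
    (eK : ℕ) (heK : eAbs K L v p = (eK : ℕ∞))
    (A0 b0 : ℕ) (hb0 : 1 ≤ b0 ∧ b0 ≤ p ^ k) (hpb0 : ¬ p ∣ b0)
    (hA0 : 1 ≤ A0 ∧ A0 ≤ eK)
    (ω : K) (hω : IsTeichmuller K L v p ω)
    (a : K) (ha : a = 1 ∨ (a - 1 ≠ 0 ∧ 0 < v (algebraMap K L (a - 1))))
    (f : Polynomial K)
    (hf : f = X ^ p ^ k + C ((-1 : K) ^ b0 * ω * πK ^ A0) * X ^ (p ^ k - b0)
      + C ((-1 : K) ^ p ^ k * πK * a))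
    (πL : L) (hroot : Polynomial.aeval πL f = 0)
    (hgen : Algebra.adjoin K {πL} = ⊤) :
    HasInsepIndices K L v p (p ^ k) k
      (fun j => if j = k then 0 else ((p ^ k * A0 - b0 : ℕ) : ℕ∞)) := by
  obtain ⟨hπK0, hπK1⟩ := hπK
  obtain ⟨hb01, hb02⟩ := hb0
  obtain ⟨hA01, hA02⟩ := hA0
  obtain ⟨hω0, hω1, -⟩ := hω
  have hq4 : 4 ≤ p ^ k := by
    calc (4:ℕ) = 2 ^ 2 := rfl
    _ ≤ p ^ 2 := Nat.pow_le_pow_left hp.two_le 2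
    _ ≤ p ^ k := Nat.pow_le_pow_right hp.one_lt.le hk
  have hb0q : b0 < p ^ k := by
    rcases lt_or_eq_of_le hb02 with h | h
    · exact h
    · exact absurd (h ▸ dvd_pow_self p (by omega : k ≠ 0)) hpb0
  have ha0 : a ≠ 0 := by
    rintro rfl
    rcases ha with h | ⟨h1, h2⟩
    · exact one_ne_zero h.symm
    · rw [zero_sub, map_neg, map_one, v_neg hv 1 one_ne_zero, v_one hv] at h2
      exact lt_irrefl _ h2
  have hva : v (algebraMap K L a) = 0 := by
    rcases ha with rfl | ⟨h1, h2⟩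
    · rw [map_one, v_one hv]
    · have he : algebraMap K L a = 1 + algebraMap K L (a - 1) := by
        rw [map_sub, map_one]; ring
      rw [he]
      have h3 := v_add_eq_left hv 1 (algebraMap K L (a - 1)) one_ne_zero
        (algMap_ne_zero _ h1) (by rw [v_one hv]; exact h2)
      rw [h3.2, v_one hv]
  set α : K := (-1 : K) ^ b0 * ω * πK ^ A0 with hαdef
  set β : K := (-1 : K) ^ p ^ k * πK * a with hβdef
  have hneg1 : ((-1 : K) ^ b0) ≠ 0 := pow_ne_zero _ (neg_ne_zero.2 one_ne_zero)
  have hneg2 : ((-1 : K) ^ p ^ k) ≠ 0 := pow_ne_zero _ (neg_ne_zero.2 one_ne_zero)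
  have hα0 : α ≠ 0 := mul_ne_zero (mul_ne_zero hneg1 hω0) (pow_ne_zero _ hπK0)
  have hβ0 : β ≠ 0 := mul_ne_zero (mul_ne_zero hneg2 hπK0) ha0
  have hvα : v (algebraMap K L α) = (A0 : ℚ) := by
    rw [hαdef, v_alg_mul hv _ _ (mul_ne_zero hneg1 hω0) (pow_ne_zero _ hπK0),
      v_alg_mul hv _ _ hneg1 hω0, v_alg_neg_one_pow hv, hω1,
      v_alg_pow hv _ hπK0, hπK1]
    ring
  have hvβ : v (algebraMap K L β) = 1 := by
    rw [hβdef, v_alg_mul hv _ _ (mul_ne_zero hneg2 hπK0) ha0,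
      v_alg_mul hv _ _ hneg2 hπK0, v_alg_neg_one_pow hv, hva, hπK1]
    ring
  have heq : πL ^ p ^ k + algebraMap K L α * πL ^ (p ^ k - b0)
      + algebraMap K L β = 0 := by
    have h := hroot
    rw [hf] at h
    simpa [map_add, map_mul, map_pow, aeval_X, aeval_C] using h
  have hπL0 : πL ≠ 0 := by
    rintro rfl
    rw [zero_pow (by omega : p ^ k ≠ 0), zero_pow (by omega : p ^ k - b0 ≠ 0),
      mul_zero, zero_add, zero_add] at heq
    exact hβ0 ((_root_.map_eq_zero (algebraMap K L)).1 heq)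
  have hvπ : v πL = 1 / ((p ^ k : ℕ) : ℚ) :=
    key_vpiL p k hp hk hv πK hπK0 hπK1 A0 b0 hb01 hb0q hA01 α β hα0 hvα hβ0 hvβ
      πL hπL0 heq
  -- f is monic of degree p ^ k
  have hf' : f = X ^ p ^ k + (C α * X ^ (p ^ k - b0) + C β) := by
    rw [hf, add_assoc]
  have hdegr : (C α * X ^ (p ^ k - b0) + C β).degree < (X ^ p ^ k : K[X]).degree := by
    rw [degree_X_pow]
    apply lt_of_le_of_lt (degree_add_le _ _)
    apply max_lt
    · exact lt_of_le_of_lt (degree_C_mul_X_pow_le _ _)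
        (by exact_mod_cast (by omega : p ^ k - b0 < p ^ k))
    · exact lt_of_le_of_lt degree_C_le
        (by exact_mod_cast (by omega : 0 < p ^ k))
  have hmon : f.Monic := by
    rw [hf']
    exact (monic_X_pow _).add_of_left hdegr
  have hdegf : f.degree = ((p ^ k : ℕ) : WithBot ℕ) := by
    rw [hf', degree_add_eq_left_of_degree_lt hdegr, degree_X_pow]
  have hnatdegf : f.natDegree = p ^ k := natDegree_eq_of_degree_eq_some hdegf
  have hint : IsIntegral K πL := ⟨f, hmon, by rw [← Polynomial.aeval_def]; exact hroot⟩
  have hdvd : minpoly K πL ∣ f := minpoly.dvd K πL hroot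
  have hge : p ^ k ≤ (minpoly K πL).natDegree :=
    minpoly_natDegree_ge _ hv (by omega) πL hπL0 hvπ hint
  have hfne : f ≠ 0 := hmon.ne_zero
  have hmin : minpoly K πL = f := by
    obtain ⟨c, hc⟩ := hdvd
    have hc0 : c ≠ 0 := by rintro rfl; rw [mul_zero] at hc; exact hfne hc
    have hgne : minpoly K πL ≠ 0 := minpoly.ne_zero hint
    have hnat : (minpoly K πL).natDegree + c.natDegree = p ^ k := by
      rw [← hnatdegf, hc, natDegree_mul hgne hc0]
    have hcd : c.natDegree = 0 := by omega
    obtain ⟨x, rfl⟩ := Polynomial.natDegree_eq_zero.1 hcd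
    have h1 := congrArg leadingCoeff hc
    rw [hmon.leadingCoeff, leadingCoeff_mul, (minpoly.monic hint).leadingCoeff,
      one_mul, leadingCoeff_C] at h1
    rw [← h1, map_one, mul_one] at hc
    exact hc.symm
  -- coefficients of f
  have hcq : f.coeff 0 = β := by
    rw [hf]
    simp only [coeff_add, coeff_X_pow, coeff_C_mul, coeff_C]
    split_ifs <;> first | (exfalso; omega) | ring1
  have hcb : f.coeff (p ^ k - b0) = α := by
    rw [hf]
    simp only [coeff_add, coeff_X_pow, coeff_C_mul, coeff_C]
    split_ifs <;> first | (exfalso; omega) | ring1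
  have hcz : ∀ j, j ≠ p ^ k → j ≠ p ^ k - b0 → j ≠ 0 → f.coeff j = 0 := by
    intro j h1 h2 h3
    rw [hf]
    simp only [coeff_add, coeff_X_pow, coeff_C_mul, coeff_C]
    split_ifs <;> first | (exfalso; omega) | ring1
  -- coefficient valuations
  have hWb : coeffVal K L v (p ^ k) πL b0 = (A0 : ℕ∞) := by
    simp only [coeffVal, hmin, hcb, if_neg hα0, hvα]
    simp
  have hWq : coeffVal K L v (p ^ k) πL (p ^ k) = 1 := by
    simp only [coeffVal, hmin, Nat.sub_self, hcq, if_neg hβ0, hvβ]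
    simp
  have hWz : ∀ h, 1 ≤ h → h ≤ p ^ k → h ≠ b0 → h ≠ p ^ k →
      coeffVal K L v (p ^ k) πL h = ⊤ := by
    intro h h1 h2 h3 h4
    have hz : f.coeff (p ^ k - h) = 0 := by apply hcz <;> omega
    simp [coeffVal, hmin, hz]
  haveI : Fact p.Prime := ⟨hp⟩
  have hpvb : padicValNat p b0 = 0 := padicValNat.eq_zero_of_not_dvd hpb0
  have hpvq : padicValNat p (p ^ k) = k := padicValNat.prime_pow k
  have harith : (↑(p ^ k) : ℕ∞) * (A0 : ℕ∞) - (b0 : ℕ∞)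
      = ((p ^ k * A0 - b0 : ℕ) : ℕ∞) := by
    rw [← Nat.cast_mul, enat_sub_coe]
  have hitlt : ∀ j, j < k → itildeIdx p (p ^ k) (coeffVal K L v (p ^ k) πL) j
      = ((p ^ k * A0 - b0 : ℕ) : ℕ∞) := by
    intro j hj
    apply le_antisymm
    · apply iInf_le_of_le ⟨b0, hb01, hb0q.le, by rw [hpvb]; omega⟩
      show (↑(p ^ k) : ℕ∞) * coeffVal K L v (p ^ k) πL b0 - (b0 : ℕ∞) ≤ _
      rw [hWb, harith]
    · apply le_iInf
      rintro ⟨h, hh1, hh2, hh3⟩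
      show _ ≤ (↑(p ^ k) : ℕ∞) * coeffVal K L v (p ^ k) πL h - (h : ℕ∞)
      by_cases hb : h = b0
      · subst hb; rw [hWb, harith]
      · by_cases hq' : h = p ^ k
        · exfalso; rw [hq', hpvq] at hh3; omega
        · rw [hWz h hh1 hh2 hb hq',
            ENat.mul_top (Nat.cast_ne_zero.2 (by omega : p ^ k ≠ 0)),
            ENat.top_sub_coe]
          exact le_top
  have hitk : itildeIdx p (p ^ k) (coeffVal K L v (p ^ k) πL) k = 0 := by
    apply le_antisymm
    · apply iInf_le_of_le ⟨p ^ k, by omega, le_refl _, by rw [hpvq]⟩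
      show (↑(p ^ k) : ℕ∞) * coeffVal K L v (p ^ k) πL (p ^ k) - (↑(p ^ k) : ℕ∞) ≤ 0
      rw [hWq, mul_one, tsub_self]
    · exact zero_le
  have hmaingoal : ∀ j ≤ k,
      insepIdx p (p ^ k) k ((eK : ℕ∞)) (coeffVal K L v (p ^ k) πL) j
      = if j = k then 0 else ((p ^ k * A0 - b0 : ℕ) : ℕ∞) := by
    intro j hj
    by_cases hjk : j = k
    · rw [if_pos hjk]
      apply le_antisymm
      · apply iInf_le_of_le ⟨k, le_of_eq hjk, le_refl _⟩
        show itildeIdx p (p ^ k) (coeffVal K L v (p ^ k) πL) k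
          + ((k : ℕ∞) - (j : ℕ∞)) * ↑(p ^ k) * ↑eK ≤ 0
        rw [hitk, hjk, tsub_self, zero_mul, zero_mul, add_zero]
      · exact zero_le
    · have hjlt : j < k := by omega
      rw [if_neg hjk]
      apply le_antisymm
      · apply iInf_le_of_le ⟨j, le_refl _, hj⟩
        show itildeIdx p (p ^ k) (coeffVal K L v (p ^ k) πL) j
          + ((j : ℕ∞) - (j : ℕ∞)) * ↑(p ^ k) * ↑eK ≤ _
        rw [hitlt j hjlt, tsub_self, zero_mul, zero_mul, add_zero]
      · apply le_iInf
        rintro ⟨j', hjj', hj'k⟩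
        show _ ≤ itildeIdx p (p ^ k) (coeffVal K L v (p ^ k) πL) j'
          + ((j' : ℕ∞) - (j : ℕ∞)) * ↑(p ^ k) * ↑eK
        by_cases hj'' : j' = k
        · rw [hj'', hitk, zero_add, enat_sub_coe, ← Nat.cast_mul, ← Nat.cast_mul,
            Nat.cast_le]
          have h1 : p ^ k * A0 ≤ p ^ k * eK := Nat.mul_le_mul_left _ hA02
          have h2 : p ^ k * eK ≤ (k - j) * (p ^ k * eK) :=
            Nat.le_mul_of_pos_left _ (by omega)
          have h3 : (k - j) * (p ^ k * eK) = (k - j) * p ^ k * eK :=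
            (mul_assoc _ _ _).symm
          omega
        · rw [hitlt j' (by omega)]
          exact le_self_add
  refine ⟨πL, hvπ, hgen, ?_⟩
  intro j hj
  rw [heK]
  exact hmaingoal j hj
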